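/- Let w = x_1^{e_1}⋯x_k^{e_k} and w' = x_1^{e_1}⋯x_{i+1}^{e_{i+1}} x_i^{e_i}⋯x_k^{e_k} be two words differing by a swap of adjacent commuting syllables (so [x_i, x_{i+1}] = 1), both in Min(σ). Suppose φ: G(Γ) → Homeo(S) realizes each generator s_j as a map supported on a region X_j, with X_i ∩ X_j = ∅ whenever s_i and s_j commute. Then the 'subsurface assignment' maps agree: for each syllable x_m^{e_m}, φ(x_1^{e_1}⋯x_{m-1}^{e_{m-1}})(X_{J(m)}) computed from w equals the corresponding region computed from w', where J(m) is the index with x_m = s_{J(m)}. Key step: since the support of φ(x_{i+1}^{e_{i+1}}) is disjoint from X_{J(i)}, we have φ(x_{i+1}^{e_{i+1}})(X_{J(i)}) = X_{J(i)}. -/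

import Mathlib

/-- The commutator relators of a right-angled Artin group on the graph `Γ`. -/
def raagRel {V : Type*} (Γ : SimpleGraph V) : Set (FreeGroup V) :=
  {r | ∃ u v : V, Γ.Adj u v ∧
    r = FreeGroup.of u * FreeGroup.of v * (FreeGroup.of u)⁻¹ * (FreeGroup.of v)⁻¹}

/-- The right-angled Artin group on the graph `Γ`. -/
abbrev RAAG {V : Type*} (Γ : SimpleGraph V) := PresentedGroup (raagRel Γ)

/-- The generator of `RAAG Γ` corresponding to the vertex `v`. -/
def raagGen {V : Type*} (Γ : SimpleGraph V) (v : V) : RAAG Γ :=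
  PresentedGroup.of (rels := raagRel Γ) v

/-- The element of `RAAG Γ` represented by a word in syllable form
`x₁^{e₁} ⋯ x_k^{e_k}`, encoded as a list of (generator, exponent) pairs. -/
def wordProd {V : Type*} (Γ : SimpleGraph V) (w : List (V × ℤ)) : RAAG Γ :=
  (w.map fun p => (raagGen Γ p.1) ^ p.2).prod

/-- `w` is a word for `σ` with the minimal number of syllables (`w ∈ Min(σ)`). -/
def IsMinWord {V : Type*} (Γ : SimpleGraph V) (σ : RAAG Γ) (w : List (V × ℤ)) : Prop :=
  wordProd Γ w = σ ∧ ∀ w' : List (V × ℤ), wordProd Γ w' = σ → w.length ≤ w'.length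

/-- The number of syllables of `σ`: the least number of syllables of a word representing it. -/
noncomputable def sylCount {V : Type*} (Γ : SimpleGraph V) (σ : RAAG Γ) : ℕ :=
  sInf {k | ∃ w : List (V × ℤ), wordProd Γ w = σ ∧ w.length = k}

/-- Number of earlier occurrences of the syllable at position `i` in `w`. -/
def occCount {V : Type*} [DecidableEq V] [Inhabited V] (w : List (V × ℤ)) (i : ℕ) : ℕ :=
  (w.take i).count (w.getD i default)

/-- Position `i'` of `w'` carries the same syllable (same generator, exponent and
occurrence number) as position `i` of `w`. -/
def sylMatch {V : Type*} [DecidableEq V] [Inhabited V]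
    (w w' : List (V × ℤ)) (i i' : ℕ) : Prop :=
  i < w.length ∧ i' < w'.length ∧ w'.getD i' default = w.getD i default ∧
    occCount w' i' = occCount w i

/-- The syllable partial order on `syl(σ)`: the syllable at position `i` of the minimal
word `w` precedes the one at position `j` in *every* minimal word for `σ`. -/
def sylPrec {V : Type*} [DecidableEq V] [Inhabited V] (Γ : SimpleGraph V) (σ : RAAG Γ)
    (w : List (V × ℤ)) (i j : ℕ) : Prop :=
  ∀ w' : List (V × ℤ), IsMinWord Γ σ w' →
    ∀ i' j' : ℕ, sylMatch w w' i i' → sylMatch w w' j j' → i' < j'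

/-- The subsurface assigned to the `m`-th syllable of the word `w`:
`X^w(x_m^{e_m}) = φ(x₁^{e₁}⋯x_{m-1}^{e_{m-1}})(X_{J(m)})`. -/
def sylSubsurface {V S : Type*} [Inhabited V] (Γ : SimpleGraph V)
    (φ : RAAG Γ →* Equiv.Perm S) (X : V → Set S) (w : List (V × ℤ)) (m : ℕ) : Set S :=
  (φ (wordProd Γ (w.take m))) '' X (w.getD m default).1

/-- Lemma "Xsigma", single-swap case: if `w' ∈ Min(σ)` is obtained from `w ∈ Min(σ)` by
swapping the adjacent commuting syllables at positions `i` and `i+1`, and commuting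
generators have disjoint supports, then the subsurface assignments of `w` and `w'` agree
(under the position swap `i ↔ i+1`); the key step being that `φ(x_{i+1}^{e_{i+1}})` fixes
`X_{J(i)}` setwise. -/

lemma raag_commute {V : Type*} (Γ : SimpleGraph V) {u v : V} (h : Γ.Adj u v) :
    Commute (raagGen Γ u) (raagGen Γ v) := by
  rw [← commutatorElement_eq_one_iff_commute]
  have h1 : (QuotientGroup.mk (FreeGroup.of u * FreeGroup.of v * (FreeGroup.of u)⁻¹ *
      (FreeGroup.of v)⁻¹) : RAAG Γ) = 1 :=
    (QuotientGroup.eq_one_iff _).mpr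
      (Subgroup.subset_normalClosure (s := raagRel Γ) ⟨u, v, h, rfl⟩)
  simp only [raagGen, PresentedGroup.of, commutatorElement_def, ← map_mul, ← map_inv]
  exact h1

lemma image_eq_of_fixed {S : Type*} (f : S → S) (A : Set S) (h : ∀ s ∈ A, f s = s) :
    f '' A = A := by
  ext x
  constructor
  · rintro ⟨y, hy, rfl⟩; rw [h y hy]; exact hy
  · intro hx; exact ⟨x, hx, h x hx⟩

lemma wordProd_append {V : Type*} (Γ : SimpleGraph V) (l₁ l₂ : List (V × ℤ)) :
    wordProd Γ (l₁ ++ l₂) = wordProd Γ l₁ * wordProd Γ l₂ := by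
  simp [wordProd]

theorem subsurface_assignment_swap_invariant {V S : Type*} [Inhabited V]
    (Γ : SimpleGraph V) (φ : RAAG Γ →* Equiv.Perm S) (X : V → Set S)
    (hsupp : ∀ (v : V) (s : S), s ∉ X v → φ (raagGen Γ v) s = s)
    (hdisj : ∀ u v : V, Γ.Adj u v → X u ∩ X v = ∅)
    (σ : RAAG Γ) (w w' : List (V × ℤ)) (i : ℕ)
    (hmin : IsMinWord Γ σ w) (hmin' : IsMinWord Γ σ w')
    (hi : i + 1 < w.length)
    (hcomm : Γ.Adj (w.getD i default).1 (w.getD (i + 1) default).1)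
    (hw' : w' = (w.set i (w.getD (i + 1) default)).set (i + 1) (w.getD i default)) :
    ((φ ((raagGen Γ (w.getD (i + 1) default).1) ^ (w.getD (i + 1) default).2)) ''
        X (w.getD i default).1 = X (w.getD i default).1) ∧
    ∀ m, m < w.length →
      sylSubsurface Γ φ X w m = sylSubsurface Γ φ X w' (Equiv.swap i (i + 1) m) := by
  set a := w.getD i default with ha
  set b := w.getD (i + 1) default with hb
  have hil : i < w.length := by omega
  set t := w.take i with ht
  set d := w.drop (i + 2) with hd
  have htlen : t.length = i := by simp [ht]; omega
  have hai : w[i] = a := (List.getD_eq_getElem w default hil).symm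
  have hbi : w[i+1] = b := (List.getD_eq_getElem w default hi).symm
  have hwdec : w = t ++ a :: b :: d := by
    conv_lhs => rw [← List.take_append_drop i w]
    rw [List.drop_eq_getElem_cons hil, List.drop_eq_getElem_cons hi, hai, hbi]
  have hw'dec : w' = t ++ b :: a :: d := by
    rw [hw']
    conv_lhs => rw [hwdec]
    simp [List.set_append, htlen]
  -- commuting and fixing facts
  have hc : Commute ((raagGen Γ a.1) ^ a.2) ((raagGen Γ b.1) ^ b.2) :=
    (raag_commute Γ hcomm).zpow_zpow _ _
  have hdisjab := hdisj _ _ hcomm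
  have hfixb : ∀ s ∈ X a.1, (φ ((raagGen Γ b.1) ^ b.2)) s = s := by
    intro s hs
    have hns : s ∉ X b.1 := fun hh =>
      Set.eq_empty_iff_forall_notMem.mp hdisjab s ⟨hs, hh⟩
    have h0 : Function.IsFixedPt (φ (raagGen Γ b.1)) s := hsupp _ _ hns
    simpa [map_zpow, Function.IsFixedPt] using h0.perm_zpow b.2
  have hfixa : ∀ s ∈ X b.1, (φ ((raagGen Γ a.1) ^ a.2)) s = s := by
    intro s hs
    have hns : s ∉ X a.1 := fun hh =>
      Set.eq_empty_iff_forall_notMem.mp hdisjab s ⟨hh, hs⟩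
    have h0 : Function.IsFixedPt (φ (raagGen Γ a.1)) s := hsupp _ _ hns
    simpa [map_zpow, Function.IsFixedPt] using h0.perm_zpow a.2
  have hpart1 : (φ ((raagGen Γ b.1) ^ b.2)) '' X a.1 = X a.1 :=
    image_eq_of_fixed _ _ hfixb
  have hpart1a : (φ ((raagGen Γ a.1) ^ a.2)) '' X b.1 = X b.1 :=
    image_eq_of_fixed _ _ hfixa
  refine ⟨hpart1, ?_⟩
  intro m hm
  -- getD facts for w'
  have hlen' : w'.length = w.length := by rw [hw'dec, hwdec]; simp
  have hg'i : w'.getD i default = b := by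
    rw [hw'dec, List.getD_append_right _ _ _ _ (by omega)]
    simp [htlen]
  have hg'i1 : w'.getD (i+1) default = a := by
    rw [hw'dec, List.getD_append_right _ _ _ _ (by omega)]
    have : i + 1 - t.length = 1 := by omega
    rw [this]
    rfl
  have hg'other : ∀ n, n < w.length → n ≠ i → n ≠ i + 1 → w'.getD n default = w.getD n default := by
    intro n hn h1 h2
    rcases lt_or_ge n i with hni | hni
    · rw [hw'dec, hwdec, List.getD_append _ _ _ _ (by omega), List.getD_append _ _ _ _ (by omega)]
    · obtain ⟨k, hk⟩ : ∃ k, n - t.length = k + 2 := ⟨n - i - 2, by omega⟩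
      rw [hw'dec, hwdec, List.getD_append_right _ _ _ _ (by omega),
        List.getD_append_right _ _ _ _ (by omega), hk]
      rfl
  -- take facts
  have htake_lt : ∀ n, n ≤ i → w'.take n = w.take n := by
    intro n hn
    rw [hw'dec, hwdec, List.take_append_of_le_length (by omega),
      List.take_append_of_le_length (by omega)]
  have hone : i + 1 - t.length = 1 := by omega
  have htake_i1 : w.take (i+1) = t ++ [a] := by
    conv_lhs => rw [hwdec]
    rw [List.take_append, List.take_of_length_le (by omega), hone]
    rfl
  have htake_i1' : w'.take (i+1) = t ++ [b] := by
    conv_lhs => rw [hw'dec]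
    rw [List.take_append, List.take_of_length_le (by omega), hone]
    rfl
  have htake_i : w.take i = t := ht.symm
  have htake_i' : w'.take i = t := by rw [htake_lt i le_rfl]
  -- main case split
  rcases lt_trichotomy m i with hmi | rfl | hmi
  · -- m < i
    rw [Equiv.swap_apply_of_ne_of_ne (by omega) (by omega)]
    unfold sylSubsurface
    rw [htake_lt m (by omega), hg'other m hm (by omega) (by omega)]
  · -- m = i
    rw [Equiv.swap_apply_left]
    unfold sylSubsurface
    rw [htake_i1', hg'i1, ← ha, htake_i, wordProd_append]
    have : wordProd Γ [b] = (raagGen Γ b.1) ^ b.2 := by simp [wordProd]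
    rw [this, map_mul, Equiv.Perm.coe_mul, Set.image_comp, hpart1]
  rcases Nat.eq_or_lt_of_le (Nat.succ_le_of_lt hmi) with hmi1 | hmi1
  · -- m = i + 1
    subst hmi1
    rw [Equiv.swap_apply_right]
    unfold sylSubsurface
    rw [htake_i', hg'i, ← hb, htake_i1, wordProd_append]
    have hwa : wordProd Γ [a] = (raagGen Γ a.1) ^ a.2 := by simp [wordProd]
    rw [hwa, map_mul, Equiv.Perm.coe_mul, Set.image_comp, hpart1a]
  · -- m > i + 1
    rw [Equiv.swap_apply_of_ne_of_ne (by omega) (by omega)]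
    unfold sylSubsurface
    rw [hg'other m hm (by omega) (by omega)]
    have hkey : wordProd Γ (w'.take m) = wordProd Γ (w.take m) := by
      have h1 : w.take m = t ++ a :: b :: d.take (m - (i+2)) := by
        conv_lhs => rw [hwdec]
        rw [List.take_append, List.take_of_length_le (by omega), htlen]
        obtain ⟨k, hk⟩ : ∃ k, m - i = k + 2 := ⟨m - i - 2, by omega⟩
        rw [hk]
        have : m - (i + 2) = k := by omega
        rw [this]
        rfl
      have h2 : w'.take m = t ++ b :: a :: d.take (m - (i+2)) := by
        conv_lhs => rw [hw'dec]
        rw [List.take_append, List.take_of_length_le (by omega), htlen]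
        obtain ⟨k, hk⟩ : ∃ k, m - i = k + 2 := ⟨m - i - 2, by omega⟩
        rw [hk]
        have : m - (i + 2) = k := by omega
        rw [this]
        rfl
      rw [h1, h2]
      simp only [wordProd, List.map_append, List.prod_append, List.map_cons, List.prod_cons]
      congr 1
      rw [← mul_assoc, ← mul_assoc, hc.eq]
    rw [hkey]
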